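/- Let T = (V, E) be an infinite, locally finite tree with a distinguished root vertex o. Let u₀, u₁, …, u_k be a path in the subgraph of T induced on T_r such that every u_j has deg_{T_r}(u_j) = 2. Let S ⊆ V consist of the vertices u₀, …, u_k together with all vertices w ∉ T_r such that w lies in the connected component of some u_j in the subgraph of T induced on (V \ T_r) ∪ {u_j}. Then every edge of T with exactly one endpoint in S is incident to u₀ or to u_k; in particular, |∂S| ≤ deg(u₀) + deg(u_k). -/

import Mathlib

open SimpleGraph

variable {V : Type*}

/-- Reachability within a set `s`: there is a walk from `a` to `b` all of whose
vertices lie in `s` (i.e. reachability in the induced subgraph on `s`). -/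
def ReachableWithin (G : SimpleGraph V) (s : Set V) : V → V → Prop :=
  Relation.ReflTransGen (fun x y => G.Adj x y ∧ x ∈ s ∧ y ∈ s)

/-- The connected component of `u` in the subgraph of `G` induced on `s`. -/
def componentIn (G : SimpleGraph V) (s : Set V) (u : V) : Set V :=
  {w | w ∈ s ∧ ReachableWithin G s u w}

/-- The backbone of `G` relative to the vertex set `s`, rooted at `o`: vertices lying on
an infinite injective path starting at `o` all of whose vertices are in `s`. -/
def BackboneIn (G : SimpleGraph V) (s : Set V) (o : V) : Set V :=
  {v | ∃ f : ℕ → V, f 0 = o ∧ Function.Injective f ∧ (∀ n, f n ∈ s) ∧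
    (∀ n, G.Adj (f n) (f (n + 1))) ∧ ∃ k, f k = v}

/-- The backbone `T_r` of `G` rooted at `o`: vertices lying on an infinite injective
path starting at the root `o`. -/
def Backbone (G : SimpleGraph V) (o : V) : Set V :=
  BackboneIn G Set.univ o

/-- The edge boundary of a vertex set `S`: edges of `G` with exactly one endpoint in `S`. -/
def edgeBdry (G : SimpleGraph V) (S : Set V) : Set (Sym2 V) :=
  {e | ∃ a b : V, G.Adj a b ∧ e = s(a, b) ∧ a ∈ S ∧ b ∉ S}

/-- The degree of `u` in the subgraph of `G` induced on `s`. -/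
noncomputable def degIn (G : SimpleGraph V) (s : Set V) (u : V) : ℕ :=
  (G.neighborSet u ∩ s).ncard

/-- Condition (C1) with constant `M`: for every vertex `v`, every connected component of
the subgraph induced on `(V \ T_r) ∪ {v}` has at most `M` vertices. -/
def CondC1 (G : SimpleGraph V) (o : V) (M : ℕ) : Prop :=
  ∀ v u : V, u ∈ (Backbone G o)ᶜ ∪ {v} →
    (componentIn G ((Backbone G o)ᶜ ∪ {v}) u).ncard ≤ M

/-- Condition (C2) with constant `M`: there is no path `u 0, u 1, …, u M` in the subgraph
induced on the backbone `T_r` all of whose vertices have degree `2` in that subgraph. -/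
def CondC2 (G : SimpleGraph V) (o : V) (M : ℕ) : Prop :=
  ¬ ∃ u : ℕ → V, (∀ j, j ≤ M → u j ∈ Backbone G o) ∧
    (∀ j, j < M → G.Adj (u j) (u (j + 1))) ∧
    (∀ j k, j ≤ M → k ≤ M → u j = u k → j = k) ∧
    (∀ j, j ≤ M → degIn G (Backbone G o) (u j) = 2)

/-- Non-amenability: the edge boundary of every finite nonempty vertex set is at least a
fixed positive proportion of its size. -/
def NonAmenable (G : SimpleGraph V) : Prop :=
  ∃ c : ℝ, 0 < c ∧ ∀ S : Set V, S.Finite → S.Nonempty →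
    c * (S.ncard : ℝ) ≤ ((edgeBdry G S).ncard : ℝ)

/-- `K` is connected in `G`: any two vertices of `K` are joined by a walk inside `K`. -/
def ConnectedIn (G : SimpleGraph V) (K : Set V) : Prop :=
  ∀ a ∈ K, ∀ b ∈ K, ReachableWithin G K a b

/-- `|K|_D`: the sum over the vertices of the finite set `K` of their degrees in `G`. -/
noncomputable def degSumF (G : SimpleGraph V) (K : Finset V) : ℕ :=
  ∑ v ∈ K, (G.neighborSet v).ncard

/-- The edge-expansion constant `Φ_E(G)`. -/
noncomputable def expConst (G : SimpleGraph V) : ℝ :=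
  sInf {x : ℝ | ∃ K : Finset V, K.Nonempty ∧ ConnectedIn G ↑K ∧
    x = ((edgeBdry G ↑K).ncard : ℝ) / (degSumF G K : ℝ)}

lemma reachableWithin_walk {G : SimpleGraph V} {s : Set V} {x y : V}
    (hx : x ∈ s) (h : ReachableWithin G s x y) :
    ∃ w : G.Walk x y, ∀ v ∈ w.support, v ∈ s := by
  induction h with
  | refl => exact ⟨SimpleGraph.Walk.nil, by simpa using hx⟩
  | tail _ hbc ih =>
    obtain ⟨w, hw⟩ := ih
    refine ⟨w.concat hbc.1, ?_⟩
    intro v hv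
    rw [SimpleGraph.Walk.support_concat] at hv
    rcases List.mem_append.mp hv with h | h
    · exact hw v h
    · rw [List.mem_singleton] at h; subst h; exact hbc.2.2

lemma backbone_reachable {G : SimpleGraph V} {o v : V} (h : v ∈ Backbone G o) :
    ReachableWithin G (Backbone G o) o v := by
  obtain ⟨f, hf0, hfinj, -, hfadj, n, hfn⟩ := h
  subst hfn
  subst hf0
  have hmem : ∀ m, f m ∈ Backbone G (f 0) := fun m =>
    ⟨f, rfl, hfinj, fun _ => trivial, hfadj, m, rfl⟩
  induction n with
  | zero => exact .refl
  | succ n ih => exact .tail ih ⟨hfadj n, hmem n, hmem (n + 1)⟩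

/-- For a degree-2 (in the backbone) path `u 0, …, u k` of the backbone,
every boundary edge of the path together with the attached off-backbone components is
incident to `u 0` or `u k`; in particular `|∂S| ≤ deg (u 0) + deg (u k)`. -/
theorem statement8 {V : Type*} (G : SimpleGraph V) (o : V)
    (hT : G.IsTree) (hinf : Infinite V)
    (hlf : ∀ v : V, (G.neighborSet v).Finite)
    (k : ℕ) (u : ℕ → V)
    (hB : ∀ j, j ≤ k → u j ∈ Backbone G o)
    (hadj : ∀ j, j < k → G.Adj (u j) (u (j + 1)))
    (hinj : ∀ i j, i ≤ k → j ≤ k → u i = u j → i = j)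
    (hdeg2 : ∀ j, j ≤ k → degIn G (Backbone G o) (u j) = 2)
    (S : Set V)
    (hS : S = {w | ∃ j ≤ k, w = u j} ∪
      {w | w ∉ Backbone G o ∧
        ∃ j ≤ k, w ∈ componentIn G ((Backbone G o)ᶜ ∪ {u j}) (u j)}) :
    (∀ e ∈ edgeBdry G S, u 0 ∈ e ∨ u k ∈ e) ∧
    (edgeBdry G S).ncard ≤
      (G.neighborSet (u 0)).ncard + (G.neighborSet (u k)).ncard := by
  classical
  have key : ∀ a b : V, G.Adj a b → a ∈ S → b ∉ S → a = u 0 ∨ a = u k := by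
    intro a b hab haS hbS
    rw [hS] at haS hbS
    have hujS : ∀ j, j ≤ k → u j ∈
        ({w | ∃ j ≤ k, w = u j} ∪
          {w | w ∉ Backbone G o ∧
            ∃ j ≤ k, w ∈ componentIn G ((Backbone G o)ᶜ ∪ {u j}) (u j)}) :=
      fun j hj => Or.inl ⟨j, hj, rfl⟩
    rcases haS with ⟨j, hj, rfl⟩ | ⟨haB, j, hj, hacomp⟩
    · -- a = u j
      by_cases hbB : b ∈ Backbone G o
      · -- b is a backbone neighbor of u j
        rcases Nat.eq_zero_or_pos j with h0 | h0
        · left; rw [h0]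
        rcases eq_or_lt_of_le hj with hk | hjk
        · right; rw [hk]
        -- 0 < j < k : contradiction via degree 2
        exfalso
        obtain ⟨i, rfl⟩ : ∃ i, j = i + 1 := ⟨j - 1, (Nat.succ_pred_eq_of_pos h0).symm⟩
        set N := G.neighborSet (u (i + 1)) ∩ Backbone G o with hN
        have hfin : N.Finite := (hlf _).inter_of_left _
        have h1 : u i ∈ N :=
          ⟨(hadj i (lt_of_le_of_lt (Nat.le_succ i) hjk)).symm, hB i (le_of_lt hj)⟩
        have h2 : u (i + 2) ∈ N :=
          ⟨hadj (i + 1) hjk, hB (i + 2) hjk⟩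
        have h3 : b ∈ N := ⟨hab, hbB⟩
        have h12 : u i ≠ u (i + 2) := fun h => by
          have := hinj i (i + 2) (le_of_lt hj) hjk h; omega
        have h13 : u i ≠ b := fun h => hbS (h ▸ hujS i (le_of_lt hj))
        have h23 : u (i + 2) ≠ b := fun h => hbS (h ▸ hujS (i + 2) hjk)
        have hsub : {u i, u (i + 2), b} ⊆ N := by
          intro x hx
          rcases hx with rfl | rfl | rfl
          exacts [h1, h2, h3]
        have h3card : ({u i, u (i + 2), b} : Set V).ncard = 3 :=
          Set.ncard_eq_three.mpr ⟨_, _, _, h12, h13, h23, rfl⟩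
        have hd : N.ncard = 2 := hdeg2 (i + 1) hj
        have := Set.ncard_le_ncard hsub hfin
        rw [h3card, hd] at this
        omega
      · -- b off backbone: b ∈ S, contradiction
        exact absurd (Or.inr ⟨hbB, j, hj, Or.inl hbB,
          Relation.ReflTransGen.single
            ⟨hab, Set.mem_union_right _ rfl, Or.inl hbB⟩⟩) hbS
    · -- a off backbone, in component of u j
      exfalso
      obtain ⟨has, hreach⟩ := hacomp
      by_cases hbB : b ∈ Backbone G o
      · -- tree path uniqueness contradiction
        have hbj : b ≠ u j := fun h => hbS (h ▸ hujS j hj)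
        have haj : a ≠ u j := fun h => haB (h ▸ hB j hj)
        obtain ⟨w1, hw1⟩ := reachableWithin_walk
          (Set.mem_union_right _ (Set.mem_singleton _)) hreach
        set P := w1.bypass with hP
        have hPpath : P.IsPath := w1.bypass_isPath
        have hPsupp : ∀ v ∈ P.support, v ∈ (Backbone G o)ᶜ ∪ {u j} :=
          fun v hv => hw1 v (w1.support_bypass_subset hv)
        have hbP : b ∉ P.support := by
          intro hmem
          rcases hPsupp b hmem with h | h
          · exact h hbB
          · exact hbj h
        -- path Q from b to u j through a
        have hQ : (SimpleGraph.Walk.cons hab.symm P.reverse).IsPath := by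
          rw [SimpleGraph.Walk.cons_isPath_iff]
          refine ⟨hPpath.reverse, ?_⟩
          rw [SimpleGraph.Walk.support_reverse, List.mem_reverse]
          exact hbP
        -- path R from b to u j within the backbone
        obtain ⟨wb, hwb⟩ := reachableWithin_walk (hB 0 (Nat.zero_le k) |>.elim
          (fun f hf => ⟨f, hf.1, hf.2.1, hf.2.2.1, hf.2.2.2.1, 0, hf.1⟩) : o ∈ Backbone G o)
          (backbone_reachable hbB)
        obtain ⟨wj, hwj⟩ := reachableWithin_walk (hB 0 (Nat.zero_le k) |>.elim
          (fun f hf => ⟨f, hf.1, hf.2.1, hf.2.2.1, hf.2.2.2.1, 0, hf.1⟩) : o ∈ Backbone G o)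
          (backbone_reachable (hB j hj))
        set R := (wb.reverse.append wj).bypass with hR
        have hRpath : R.IsPath := (wb.reverse.append wj).bypass_isPath
        have hRsupp : ∀ v ∈ R.support, v ∈ Backbone G o := by
          intro v hv
          have := (wb.reverse.append wj).support_bypass_subset hv
          rw [SimpleGraph.Walk.support_append] at this
          rcases List.mem_append.mp this with h | h
          · rw [SimpleGraph.Walk.support_reverse, List.mem_reverse] at h
            exact hwb v h
          · exact hwj v (List.mem_of_mem_tail h)
        have heq : SimpleGraph.Walk.cons hab.symm P.reverse = R :=
          (hT.existsUnique_path b (u j)).unique hQ hRpath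
        have haR : a ∈ R.support := by
          rw [← heq, SimpleGraph.Walk.support_cons]
          refine List.mem_cons_of_mem _ ?_
          rw [SimpleGraph.Walk.support_reverse, List.mem_reverse]
          exact SimpleGraph.Walk.end_mem_support P
        exact haB (hRsupp a haR)
      · -- b off backbone: b ∈ S, contradiction
        exact hbS (Or.inr ⟨hbB, j, hj, Or.inl hbB,
          hreach.tail ⟨hab, has, Or.inl hbB⟩⟩)
  constructor
  · rintro e ⟨a, b, hab, rfl, haS, hbS⟩
    rcases key a b hab haS hbS with h | h
    · left; rw [← h]; exact Sym2.mem_mk_left a b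
    · right; rw [← h]; exact Sym2.mem_mk_left a b
  · have hsub : edgeBdry G S ⊆
        (fun c => s(u 0, c)) '' G.neighborSet (u 0) ∪
        (fun c => s(u k, c)) '' G.neighborSet (u k) := by
      rintro e ⟨a, b, hab, rfl, haS, hbS⟩
      rcases key a b hab haS hbS with h | h
      · subst h; exact Or.inl ⟨b, hab, rfl⟩
      · subst h; exact Or.inr ⟨b, hab, rfl⟩
    calc (edgeBdry G S).ncard
        ≤ ((fun c => s(u 0, c)) '' G.neighborSet (u 0) ∪
           (fun c => s(u k, c)) '' G.neighborSet (u k)).ncard :=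
          Set.ncard_le_ncard hsub (((hlf (u 0)).image _).union ((hlf (u k)).image _))
      _ ≤ ((fun c => s(u 0, c)) '' G.neighborSet (u 0)).ncard +
          ((fun c => s(u k, c)) '' G.neighborSet (u k)).ncard :=
          Set.ncard_union_le _ _
      _ ≤ (G.neighborSet (u 0)).ncard + (G.neighborSet (u k)).ncard :=
          add_le_add (Set.ncard_image_le (hlf _)) (Set.ncard_image_le (hlf _))
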